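/- Let |GHZ₂⟩ = (|0⟩⊗|0⟩ + |1⟩⊗|1⟩)/√2 and consider the two-party Bell scenario in which both Alice's and Bob's two measurements are given by the orthonormal bases B(π/2, π/8) = {|π/2, π/8⟩, |π/2, π + π/8⟩} and B(π/2, 5π/8) = {|π/2, 5π/8⟩, |π/2, π + 5π/8⟩}. Then the contextual fraction of the Born-rule empirical model of |GHZ₂⟩ with respect to this scenario equals √2 − 1. -/

import Mathlib

open scoped ComplexConjugate

/-- Standard Hermitian inner product on `ℂ²` (conjugate-linear in the first slot). -/
noncomputable def ip2 (u v : Fin 2 → ℂ) : ℂ := ∑ i, conj (u i) * v i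

/-- Tensor product `u ⊗ v ∈ ℂ² ⊗ ℂ²`, as a function on `Fin 2 × Fin 2`. -/
noncomputable def tens (u v : Fin 2 → ℂ) : Fin 2 × Fin 2 → ℂ := fun p => u p.1 * v p.2

/-- Standard Hermitian inner product on `ℂ² ⊗ ℂ²` (conjugate-linear in the
first slot). -/
noncomputable def ip4 (u v : Fin 2 × Fin 2 → ℂ) : ℂ := ∑ p, conj (u p) * v p

/-- Bloch vector `|θ,φ⟩ = cos(θ/2)|0⟩ + e^{iφ} sin(θ/2)|1⟩`. -/
noncomputable def bloch (θ φ : ℝ) : Fin 2 → ℂ :=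
  ![(Real.cos (θ / 2) : ℂ), Complex.exp (φ * Complex.I) * (Real.sin (θ / 2) : ℂ)]

/-- The orthonormal basis `B(θ,φ) = {|θ,φ⟩, |π−θ,π+φ⟩}` of `ℂ²`, indexed by the
outcome. -/
noncomputable def Bbasis (θ φ : ℝ) : Fin 2 → Fin 2 → ℂ :=
  ![bloch θ φ, bloch (Real.pi - θ) (Real.pi + φ)]

/-- The Born-rule empirical model of the state `ψ ∈ ℂ² ⊗ ℂ²` when Alice's
measurement `a_{i+1}` is given by the orthonormal basis `A i` and Bob's
measurement `b_{j+1}` by the orthonormal basis `B j`: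
`e_{{a_i,b_j}}(s,t) = |⟨α_{i,s} ⊗ β_{j,t}, ψ⟩|²`. -/
noncomputable def born (A B : Fin 2 → Fin 2 → Fin 2 → ℂ) (ψ : Fin 2 × Fin 2 → ℂ) :
    Fin 2 → Fin 2 → Fin 2 → Fin 2 → ℝ := fun i j s t =>
  ‖ip4 (tens (A i s) (B j t)) ψ‖ ^ 2

/-- An empirical model on the two-party Bell scenario: for each context
`{a_{i+1}, b_{j+1}}` a probability distribution on joint outcomes `(s, t)`. -/
def IsModel (e : Fin 2 → Fin 2 → Fin 2 → Fin 2 → ℝ) : Prop :=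
  (∀ i j s t, 0 ≤ e i j s t) ∧ ∀ i j, (∑ s, ∑ t, e i j s t) = 1

/-- Noncontextuality: a global probability distribution on assignments
`g : {a₁,a₂,b₁,b₂} → {0,1}` (with `X` encoded as `Fin 2 ⊕ Fin 2`, `inl i = a_{i+1}`,
`inr j = b_{j+1}`) marginalises to every context. -/
def Noncontextual (e : Fin 2 → Fin 2 → Fin 2 → Fin 2 → ℝ) : Prop :=
  ∃ d : (Fin 2 ⊕ Fin 2 → Fin 2) → ℝ,
    (∀ g, 0 ≤ d g) ∧ (∑ g, d g) = 1 ∧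
    ∀ i j s t, (∑ g ∈ Finset.univ.filter
        (fun g : Fin 2 ⊕ Fin 2 → Fin 2 => g (.inl i) = s ∧ g (.inr j) = t), d g)
      = e i j s t

/-- The noncontextual fraction of an empirical model. -/
noncomputable def NCF (e : Fin 2 → Fin 2 → Fin 2 → Fin 2 → ℝ) : ℝ :=
  sSup {l : ℝ | 0 ≤ l ∧ l ≤ 1 ∧
    ∃ eNC e' : Fin 2 → Fin 2 → Fin 2 → Fin 2 → ℝ,
      IsModel eNC ∧ Noncontextual eNC ∧ IsModel e' ∧
      ∀ i j s t, e i j s t = l * eNC i j s t + (1 - l) * e' i j s t}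

/-- The contextual fraction of an empirical model. -/
noncomputable def CF (e : Fin 2 → Fin 2 → Fin 2 → Fin 2 → ℝ) : ℝ := 1 - NCF e

/-- The two-qubit GHZ state `(|00⟩ + |11⟩)/√2`. -/
noncomputable def ghz : Fin 2 × Fin 2 → ℂ := fun p =>
  if p.1 = p.2 then ((Real.sqrt 2)⁻¹ : ℂ) else 0

/-- Alice's (= Bob's) measurements: `a₁ = B(π/2, π/8)` and `a₂ = B(π/2, 5π/8)`. -/
noncomputable def meas : Fin 2 → Fin 2 → Fin 2 → ℂ :=
  ![Bbasis (Real.pi / 2) (Real.pi / 8), Bbasis (Real.pi / 2) (5 * Real.pi / 8)]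

-- auxiliary part, to be appended after the given defs
noncomputable def sgn : Fin 2 → Fin 2 → ℝ := fun i j => if i = 0 ∧ j = 0 then 1 else -1
noncomputable def par : Fin 2 → Fin 2 → ℝ := fun s t => if s = t then 1 else -1

lemma sgn_par_pm (i j s t : Fin 2) : sgn i j * par s t = 1 ∨ sgn i j * par s t = -1 := by
  unfold sgn par; split_ifs <;> norm_num

lemma expand_ip (u v : Fin 2 → ℂ) : ip4 (tens u v) ghz
    = (conj (u 0) * conj (v 0) + conj (u 1) * conj (v 1)) * ((Real.sqrt 2 : ℝ)⁻¹ : ℝ) := by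
  simp [ip4, tens, ghz, Fintype.sum_prod_type, Fin.sum_univ_two]
  ring

lemma hexp (x : ℝ) : Complex.exp ((x:ℂ) * -Complex.I) = Complex.mk (Real.cos x) (-(Real.sin x)) := by
  rw [show ((x:ℂ) * -Complex.I) = ((-x : ℝ) : ℂ) * Complex.I by push_cast; ring,
    Complex.exp_mul_I, ← Complex.ofReal_cos, ← Complex.ofReal_sin, Real.cos_neg, Real.sin_neg,
    Complex.mk_eq_add_mul_I]

lemma key (φA φB : ℝ) :
    ‖ip4 (tens (bloch (Real.pi/2) φA) (bloch (Real.pi/2) φB)) ghz‖ ^ 2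
      = (1 + Real.cos (φA + φB)) / 4 := by
  have h2 : Real.sqrt 2 ≠ 0 := by positivity
  have hs : Real.sqrt 2 * Real.sqrt 2 = 2 := Real.mul_self_sqrt (by norm_num)
  have hinv : (Real.sqrt 2)⁻¹ = Real.sqrt 2 / 2 := by
    rw [eq_div_iff (by norm_num : (2:ℝ) ≠ 0), inv_mul_eq_div, div_eq_iff h2, hs]
  have hc : Real.cos (Real.pi/2/2) = Real.sqrt 2 / 2 := by
    rw [show Real.pi/2/2 = Real.pi/4 by ring, Real.cos_pi_div_four]
  have hsn : Real.sin (Real.pi/2/2) = Real.sqrt 2 / 2 := by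
    rw [show Real.pi/2/2 = Real.pi/4 by ring, Real.sin_pi_div_four]
  have hz : ip4 (tens (bloch (Real.pi/2) φA) (bloch (Real.pi/2) φB)) ghz
      = Complex.mk ((1 + Real.cos (φA + φB)) / (2*Real.sqrt 2)) (-(Real.sin (φA + φB)) / (2*Real.sqrt 2)) := by
    rw [expand_ip]
    simp only [bloch, Matrix.cons_val_zero, Matrix.cons_val_one, Matrix.head_cons, hc, hsn,
      map_mul, Complex.conj_ofReal, ← Complex.exp_conj, map_mul, Complex.conj_I, Complex.conj_ofReal]
    rw [hexp φA, hexp φB]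
    apply Complex.ext <;>
      simp only [Complex.add_re, Complex.add_im, Complex.mul_re, Complex.mul_im,
        Complex.ofReal_re, Complex.ofReal_im, Real.cos_add, Real.sin_add, hinv] <;>
      rw [div_eq_mul_inv _ (2 * Real.sqrt 2), mul_inv, hinv]
    · linear_combination ((1 + Real.cos φA * Real.cos φB - Real.sin φA * Real.sin φB) * Real.sqrt 2 / 8) * hs
    · linear_combination (-(Real.sin φA * Real.cos φB + Real.cos φA * Real.sin φB) * Real.sqrt 2 / 8) * hs
  rw [hz, Complex.sq_norm, Complex.normSq_mk]
  have hpy := Real.sin_sq_add_cos_sq (φA + φB)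
  field_simp
  nlinarith [hpy, hs]

lemma born_eq (i j s t : Fin 2) : born meas meas ghz i j s t
    = (1 + sgn i j * par s t * (Real.sqrt 2 / 2)) / 4 := by
  have c2 := Real.cos_pi_div_four
  fin_cases i <;> fin_cases j <;> fin_cases s <;> fin_cases t <;>
    simp only [born, meas, Bbasis, Fin.mk_zero, Fin.mk_one, Matrix.cons_val_zero, Matrix.cons_val_one, Matrix.head_cons,
      show Real.pi - Real.pi/2 = Real.pi/2 by ring, Fin.isValue] <;>
    rw [key]
  · rw [show Real.pi/8 + Real.pi/8 = Real.pi/4 by ring, c2]; norm_num [sgn, par]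
  · rw [show Real.pi/8 + (Real.pi + Real.pi/8) = Real.pi/4 + Real.pi by ring,
      Real.cos_add_pi, c2]; norm_num [sgn, par]
  · rw [show Real.pi + Real.pi/8 + Real.pi/8 = Real.pi/4 + Real.pi by ring,
      Real.cos_add_pi, c2]; norm_num [sgn, par]
  · rw [show Real.pi + Real.pi/8 + (Real.pi + Real.pi/8) = Real.pi/4 + 2*Real.pi by ring,
      Real.cos_add_two_pi, c2]; norm_num [sgn, par]
  · rw [show Real.pi/8 + 5*Real.pi/8 = Real.pi - Real.pi/4 by ring,
      Real.cos_pi_sub, c2]; norm_num [sgn, par]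
  · rw [show Real.pi/8 + (Real.pi + 5*Real.pi/8) = 2*Real.pi - Real.pi/4 by ring,
      Real.cos_two_pi_sub, c2]; norm_num [sgn, par]
  · rw [show Real.pi + Real.pi/8 + 5*Real.pi/8 = 2*Real.pi - Real.pi/4 by ring,
      Real.cos_two_pi_sub, c2]; norm_num [sgn, par]
  · rw [show Real.pi + Real.pi/8 + (Real.pi + 5*Real.pi/8) = (Real.pi - Real.pi/4) + 2*Real.pi by ring,
      Real.cos_add_two_pi, Real.cos_pi_sub, c2]; norm_num [sgn, par]
  · rw [show 5*Real.pi/8 + Real.pi/8 = Real.pi - Real.pi/4 by ring,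
      Real.cos_pi_sub, c2]; norm_num [sgn, par]
  · rw [show 5*Real.pi/8 + (Real.pi + Real.pi/8) = 2*Real.pi - Real.pi/4 by ring,
      Real.cos_two_pi_sub, c2]; norm_num [sgn, par]
  · rw [show Real.pi + 5*Real.pi/8 + Real.pi/8 = 2*Real.pi - Real.pi/4 by ring,
      Real.cos_two_pi_sub, c2]; norm_num [sgn, par]
  · rw [show Real.pi + 5*Real.pi/8 + (Real.pi + Real.pi/8) = (Real.pi - Real.pi/4) + 2*Real.pi by ring,
      Real.cos_add_two_pi, Real.cos_pi_sub, c2]; norm_num [sgn, par]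
  · rw [show 5*Real.pi/8 + 5*Real.pi/8 = Real.pi/4 + Real.pi by ring,
      Real.cos_add_pi, c2]; norm_num [sgn, par]
  · rw [show 5*Real.pi/8 + (Real.pi + 5*Real.pi/8) = Real.pi/4 + 2*Real.pi by ring,
      Real.cos_add_two_pi, c2]; norm_num [sgn, par]
  · rw [show Real.pi + 5*Real.pi/8 + 5*Real.pi/8 = Real.pi/4 + 2*Real.pi by ring,
      Real.cos_add_two_pi, c2]; norm_num [sgn, par]
  · rw [show Real.pi + 5*Real.pi/8 + (Real.pi + 5*Real.pi/8) = (Real.pi/4 + Real.pi) + 2*Real.pi by ring,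
      Real.cos_add_two_pi, Real.cos_add_pi, c2]; norm_num [sgn, par]

/-- The CHSH-type Bell functional. -/
noncomputable def Bell (m : Fin 2 → Fin 2 → Fin 2 → Fin 2 → ℝ) : ℝ :=
  ∑ i, ∑ j, ∑ s, ∑ t, sgn i j * par s t * m i j s t

lemma Bell_born : Bell (born meas meas ghz) = 2 * Real.sqrt 2 := by
  simp only [Bell, born_eq, Fin.sum_univ_two]
  norm_num [sgn, par]
  ring

lemma Bell_comb (f g : Fin 2 → Fin 2 → Fin 2 → Fin 2 → ℝ) (a b : ℝ) :
    Bell (fun i j s t => a * f i j s t + b * g i j s t) = a * Bell f + b * Bell g := by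
  simp only [Bell, Finset.mul_sum, ← Finset.sum_add_distrib]
  exact Finset.sum_congr rfl fun i _ => Finset.sum_congr rfl fun j _ =>
    Finset.sum_congr rfl fun s _ => Finset.sum_congr rfl fun t _ => by ring

lemma Bell_le_four (m : Fin 2 → Fin 2 → Fin 2 → Fin 2 → ℝ) (h : IsModel m) : Bell m ≤ 4 := by
  have : Bell m ≤ ∑ i, ∑ j, ∑ s, ∑ t, m i j s t := by
    refine Finset.sum_le_sum fun i _ => Finset.sum_le_sum fun j _ =>
      Finset.sum_le_sum fun s _ => Finset.sum_le_sum fun t _ => ?_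
    have h1 : sgn i j * par s t ≤ 1 := by unfold sgn par; split_ifs <;> norm_num
    calc sgn i j * par s t * m i j s t ≤ 1 * m i j s t :=
          mul_le_mul_of_nonneg_right h1 (h.1 _ _ _ _)
      _ = m i j s t := one_mul _
  calc Bell m ≤ ∑ i, ∑ j, ∑ s, ∑ t, m i j s t := this
    _ = ∑ _i : Fin 2, ∑ _j : Fin 2, (1:ℝ) :=
          Finset.sum_congr rfl fun i _ => Finset.sum_congr rfl fun j _ => h.2 i j
    _ = 4 := by simp [Fin.sum_univ_two]; norm_num

lemma sum_ite2 (a b : Fin 2) (c : ℝ) :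
    (∑ s : Fin 2, ∑ t : Fin 2, if a = s ∧ b = t then c * par s t else 0) = c * par a b := by
  fin_cases a <;> fin_cases b <;> simp [Fin.sum_univ_two, par]

lemma K_le_two (g : Fin 2 ⊕ Fin 2 → Fin 2) :
    (∑ i, ∑ j, sgn i j * par (g (.inl i)) (g (.inr j))) ≤ 2 := by
  simp only [Fin.sum_univ_two]
  generalize g (Sum.inl 0) = a0
  generalize g (Sum.inl 1) = a1
  generalize g (Sum.inr 0) = b0
  generalize g (Sum.inr 1) = b1
  fin_cases a0 <;> fin_cases a1 <;> fin_cases b0 <;> fin_cases b1 <;> norm_num [sgn, par]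

lemma Bell_nc_le (m : Fin 2 → Fin 2 → Fin 2 → Fin 2 → ℝ) (h : Noncontextual m) : Bell m ≤ 2 := by
  obtain ⟨d, hd0, hdsum, hmarg⟩ := h
  have hterm : ∀ i j, (∑ s, ∑ t, sgn i j * par s t * m i j s t)
      = ∑ g, d g * (sgn i j * par (g (.inl i)) (g (.inr j))) := by
    intro i j
    have h1 : ∀ s t : Fin 2, sgn i j * par s t * m i j s t
        = ∑ g, if g (.inl i) = s ∧ g (.inr j) = t then (sgn i j * d g) * par s t else 0 := by
      intro s t
      rw [← hmarg i j s t, Finset.sum_filter, Finset.mul_sum]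
      exact Finset.sum_congr rfl fun g _ => by split_ifs <;> ring
    simp only [h1]
    rw [show (∑ s : Fin 2, ∑ t : Fin 2, ∑ g : Fin 2 ⊕ Fin 2 → Fin 2,
        if g (.inl i) = s ∧ g (.inr j) = t then (sgn i j * d g) * par s t else 0)
      = ∑ g : Fin 2 ⊕ Fin 2 → Fin 2, ∑ s : Fin 2, ∑ t : Fin 2,
        if g (.inl i) = s ∧ g (.inr j) = t then (sgn i j * d g) * par s t else 0 from
      (Finset.sum_congr rfl fun s _ => Finset.sum_comm).trans Finset.sum_comm]
    exact Finset.sum_congr rfl fun g _ => by rw [sum_ite2]; ring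
  have : Bell m = ∑ g, d g * (∑ i, ∑ j, sgn i j * par (g (.inl i)) (g (.inr j))) := by
    simp only [Bell, hterm]
    rw [show (∑ i : Fin 2, ∑ j : Fin 2, ∑ g : Fin 2 ⊕ Fin 2 → Fin 2,
        d g * (sgn i j * par (g (.inl i)) (g (.inr j))))
      = ∑ g : Fin 2 ⊕ Fin 2 → Fin 2, ∑ i : Fin 2, ∑ j : Fin 2,
        d g * (sgn i j * par (g (.inl i)) (g (.inr j))) from
      (Finset.sum_congr rfl fun i _ => Finset.sum_comm).trans Finset.sum_comm]
    exact Finset.sum_congr rfl fun g _ => by simp only [Finset.mul_sum]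
  rw [this]
  calc (∑ g, d g * (∑ i, ∑ j, sgn i j * par (g (.inl i)) (g (.inr j))))
      ≤ ∑ g, d g * 2 := Finset.sum_le_sum fun g _ =>
        mul_le_mul_of_nonneg_left (K_le_two g) (hd0 g)
    _ = 2 := by rw [← Finset.sum_mul, hdsum, one_mul]

/-- assignment tuples ↔ global assignments -/
def En : ((Fin 2 × Fin 2) × (Fin 2 × Fin 2)) ≃ (Fin 2 ⊕ Fin 2 → Fin 2) where
  toFun q := Sum.elim ![q.1.1, q.1.2] ![q.2.1, q.2.2]
  invFun g := ((g (.inl 0), g (.inl 1)), (g (.inr 0), g (.inr 1)))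
  left_inv := by decide
  right_inv := by decide

noncomputable def dNC : (Fin 2 ⊕ Fin 2 → Fin 2) → ℝ := fun g =>
  if (g (.inl 0) = g (.inl 1) → g (.inr 1) ≠ g (.inl 0))
      ∧ (g (.inl 0) ≠ g (.inl 1) → g (.inr 0) = g (.inl 0)) then 1/8 else 0

noncomputable def eNC : Fin 2 → Fin 2 → Fin 2 → Fin 2 → ℝ :=
  fun i j s t => (2 + sgn i j * par s t) / 8

noncomputable def ePR : Fin 2 → Fin 2 → Fin 2 → Fin 2 → ℝ :=
  fun i j s t => (1 + sgn i j * par s t) / 4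

lemma isModel_eNC : IsModel eNC := by
  constructor
  · intro i j s t
    rcases sgn_par_pm i j s t with h | h <;> simp only [eNC, h] <;> norm_num
  · intro i j
    simp [eNC, Fin.sum_univ_two, par]
    ring

lemma isModel_ePR : IsModel ePR := by
  constructor
  · intro i j s t
    rcases sgn_par_pm i j s t with h | h <;> simp only [ePR, h] <;> norm_num
  · intro i j
    simp [ePR, Fin.sum_univ_two, par]
    ring

lemma noncontextual_eNC : Noncontextual eNC := by
  refine ⟨dNC, fun g => ?_, ?_, ?_⟩
  · unfold dNC; split_ifs <;> norm_num
  · rw [← Equiv.sum_comp En dNC]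
    simp [En, dNC, Fintype.sum_prod_type, Fin.sum_univ_two]
    norm_num
  · intro i j s t
    fin_cases i <;> fin_cases j <;> fin_cases s <;> fin_cases t <;>
      rw [Finset.sum_filter, ← Equiv.sum_comp En] <;>
      simp [En, dNC, eNC, sgn, par, Fintype.sum_prod_type, Fin.sum_univ_two] <;>
      norm_num

lemma sqrt2_facts : Real.sqrt 2 * Real.sqrt 2 = 2 ∧ 1 ≤ Real.sqrt 2 ∧ Real.sqrt 2 ≤ 2 := by
  have hs : Real.sqrt 2 * Real.sqrt 2 = 2 := Real.mul_self_sqrt (by norm_num)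
  have h0 : 0 ≤ Real.sqrt 2 := Real.sqrt_nonneg 2
  refine ⟨hs, ?_, ?_⟩ <;> nlinarith [hs, h0]

lemma mem_S : (2 - Real.sqrt 2) ∈ {l : ℝ | 0 ≤ l ∧ l ≤ 1 ∧
    ∃ eN e' : Fin 2 → Fin 2 → Fin 2 → Fin 2 → ℝ,
      IsModel eN ∧ Noncontextual eN ∧ IsModel e' ∧
      ∀ i j s t, born meas meas ghz i j s t = (2 - Real.sqrt 2) * eN i j s t
        + (1 - (2 - Real.sqrt 2)) * e' i j s t} := by
  obtain ⟨hs, h1, h2⟩ := sqrt2_facts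
  refine ⟨by linarith, by linarith, eNC, ePR, isModel_eNC, noncontextual_eNC, isModel_ePR, ?_⟩
  intro i j s t
  rw [born_eq]
  simp only [eNC, ePR]
  ring

theorem ghz_pi_eighth_contextual_fraction' :
    CF (born meas meas ghz) = Real.sqrt 2 - 1 := by
  obtain ⟨hs, h1, h2⟩ := sqrt2_facts
  have hub : ∀ l ∈ {l : ℝ | 0 ≤ l ∧ l ≤ 1 ∧
      ∃ eN e' : Fin 2 → Fin 2 → Fin 2 → Fin 2 → ℝ,
        IsModel eN ∧ Noncontextual eN ∧ IsModel e' ∧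
        ∀ i j s t, born meas meas ghz i j s t = l * eN i j s t + (1 - l) * e' i j s t},
      l ≤ 2 - Real.sqrt 2 := by
    rintro l ⟨hl0, hl1, eN, e', hN, hNCx, he', hdec⟩
    have hfun : born meas meas ghz = fun i j s t => l * eN i j s t + (1 - l) * e' i j s t := by
      funext i j s t; exact hdec i j s t
    have hb : (2 : ℝ) * Real.sqrt 2 = l * Bell eN + (1 - l) * Bell e' := by
      rw [← Bell_born, hfun, Bell_comb]
    have hbn := Bell_nc_le eN hNCx
    have hb4 := Bell_le_four e' he'
    nlinarith [mul_le_mul_of_nonneg_left hbn hl0,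
      mul_le_mul_of_nonneg_left hb4 (by linarith : (0:ℝ) ≤ 1 - l)]
  have hNCF : NCF (born meas meas ghz) = 2 - Real.sqrt 2 := by
    apply le_antisymm
    · exact csSup_le ⟨2 - Real.sqrt 2, mem_S⟩ hub
    · exact le_csSup ⟨2 - Real.sqrt 2, hub⟩ mem_S
  rw [CF, hNCF]
  ring

/-- the contextual fraction of the GHZ state with respect to the
scenario `S(B(π/2,π/8), B(π/2,5π/8))` equals `√2 − 1`. -/
theorem ghz_pi_eighth_contextual_fraction :
    CF (born meas meas ghz) = Real.sqrt 2 - 1 :=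
  ghz_pi_eighth_contextual_fraction'
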